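/- Let G = C_{n_1} × ... × C_{n_k} with 1 < n_1 | n_2 | ... | n_k. If there exists a family {H_i}_{i∈I} of subgroups of G with trivial intersection, whose union generates G, and such that all quotients G/H_i have the same exponent, then k ≥ 2 and n_{k-1} = n_k. -/

import Mathlib

/-- The abelian group with invariant factors `n 0 ∣ n 1 ∣ ... ∣ n (k-1)`. -/
abbrev IG (k : ℕ) (n : Fin k → ℕ) := ∀ i : Fin k, Multiplicative (ZMod (n i))

private lemma aux_pow_self (q : ℕ) (x : Multiplicative (ZMod q)) : x ^ q = 1 := by
  rw [← ofAdd_toAdd x, ← ofAdd_nsmul]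
  simp [nsmul_eq_mul]

private lemma aux_pow_dvd (q m : ℕ) (hq : q ∣ m) (x : Multiplicative (ZMod q)) :
    x ^ m = 1 := by
  obtain ⟨c, rfl⟩ := hq
  rw [pow_mul, aux_pow_self, one_pow]

theorem stmt_7 (k : ℕ) (hk : 1 ≤ k) (n : Fin k → ℕ)
    (h1 : ∀ i, 1 < n i) (hdvd : ∀ i j : Fin k, i ≤ j → n i ∣ n j)
    (h : ∃ (I : Type) (H : I → Subgroup (IG k n)),
      (⨅ i, H i) = ⊥ ∧ (⨆ i, H i) = ⊤ ∧
      ∀ i j : I, Monoid.exponent (IG k n ⧸ H i) = Monoid.exponent (IG k n ⧸ H j)) :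
    ∃ _ : 2 ≤ k, n ⟨k - 2, by omega⟩ = n ⟨k - 1, by omega⟩ := by
  by_contra hcon
  push_neg at hcon
  obtain ⟨I, H, hinf, hsup, hexp⟩ := h
  haveI : ∀ i, NeZero (n i) := fun i => ⟨by have := h1 i; omega⟩
  set L : Fin k := ⟨k - 1, by omega⟩ with hLdef
  have hN1 : 1 < n L := h1 L
  set δ : IG k n := Pi.mulSingle L (Multiplicative.ofAdd 1) with hδdef
  have hδne : δ ≠ 1 := by
    intro hh
    have h2 := congrFun hh L
    rw [hδdef, Pi.mulSingle_eq_same, Pi.one_apply] at h2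
    have h3 : ((1 : ℕ) : ZMod (n L)) = 0 := by
      have := ofAdd_eq_one.mp h2
      simpa using this
    have h4 := (ZMod.natCast_eq_zero_iff 1 (n L)).mp h3
    have := Nat.le_of_dvd one_pos h4
    omega
  obtain hI | hI := isEmpty_or_nonempty I
  · have hbot : δ ∈ (⊥ : Subgroup (IG k n)) := by
      rw [← hinf]
      exact Subgroup.mem_iInf.mpr fun i => hI.elim i
    exact hδne (Subgroup.mem_bot.mp hbot)
  obtain ⟨i0⟩ := hI
  set e := Monoid.exponent (IG k n ⧸ H i0) with hedef
  have hge : ∀ g : IG k n, g ^ e = 1 := by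
    intro g
    have hmem : ∀ j, g ^ e ∈ H j := by
      intro j
      have h2 := Monoid.pow_exponent_eq_one ((QuotientGroup.mk g : IG k n ⧸ H j))
      rw [hexp j i0] at h2
      rw [← QuotientGroup.mk_pow] at h2
      exact (QuotientGroup.eq_one_iff _).mp h2
    have : g ^ e ∈ ⨅ j, H j := Subgroup.mem_iInf.mpr hmem
    rwa [hinf, Subgroup.mem_bot] at this
  have hNe : n L ∣ e := by
    have h2 := congrFun (hge δ) L
    rw [Pi.pow_apply, hδdef, Pi.mulSingle_eq_same, Pi.one_apply, ← ofAdd_nsmul] at h2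
    have h3 := ofAdd_eq_one.mp h2
    rw [nsmul_eq_mul, mul_one] at h3
    exact (ZMod.natCast_eq_zero_iff e (n L)).mp h3
  obtain ⟨p, hp, hpN, hkey⟩ : ∃ p, p.Prime ∧ p ∣ n L ∧ ∀ i : Fin k, i ≠ L → n i ∣ n L / p := by
    rcases eq_or_lt_of_le hk with hk1 | hk2
    · refine ⟨(n L).minFac, Nat.minFac_prime (by omega), Nat.minFac_dvd _, ?_⟩
      intro i hi
      exact absurd (Fin.ext (by omega : (i : ℕ) = (L : ℕ))) hi
    · have hk2' : 2 ≤ k := hk2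
      set J : Fin k := ⟨k - 2, by omega⟩ with hJdef
      have hJL : J ≤ L := by simp [hJdef, hLdef, Fin.le_def]; omega
      have hMN : n J ∣ n L := hdvd J L hJL
      have hne : n J ≠ n L := hcon hk2'
      obtain ⟨t, ht⟩ := hMN
      have ht1 : t ≠ 1 := fun h => hne (by rw [h, mul_one] at ht; exact ht.symm)
      have ht0 : t ≠ 0 := fun h => by rw [h, mul_zero] at ht; omega
      obtain ⟨s, hs⟩ := Nat.minFac_dvd t
      set q := t.minFac with hqdef
      have hNps : n L = q * (n J * s) := by rw [ht, hs]; ring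
      refine ⟨q, Nat.minFac_prime ht1, ⟨n J * s, hNps⟩, ?_⟩
      intro i hi
      have hiJ : i ≤ J := by
        have : (i : ℕ) ≠ k - 1 := fun h => hi (Fin.ext h)
        have := i.isLt
        simp [hJdef, Fin.le_def]; omega
      refine (hdvd i J hiJ).trans ⟨s, ?_⟩
      rw [hNps, Nat.mul_div_cancel_left _ (Nat.minFac_prime ht1).pos]
  haveI := Fact.mk hp
  set m := n L / p with hmdef
  have hpm : p * m = n L := Nat.mul_div_cancel' hpN
  have hm0 : 0 < m := by
    rcases Nat.eq_zero_or_pos m with h0 | h0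
    · rw [h0, mul_zero] at hpm; omega
    · exact h0
  have hmN : m < n L := by nlinarith [hp.two_le]
  have hNm : ¬ n L ∣ m := fun hd => by have := Nat.le_of_dvd hm0 hd; omega
  set z : IG k n := Pi.mulSingle L (Multiplicative.ofAdd (m : ZMod (n L))) with hzdef
  have hA : ∀ g : IG k n, g ^ m = z ^ (Multiplicative.toAdd (g L)).val := by
    intro g
    funext i
    rcases eq_or_ne i L with hiL | hi
    · subst hiL
      rw [Pi.pow_apply, Pi.pow_apply, hzdef, Pi.mulSingle_eq_same]
      rw [← ofAdd_toAdd (g L), ← ofAdd_nsmul, ← ofAdd_nsmul]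
      congr 1
      rw [nsmul_eq_mul, nsmul_eq_mul, ZMod.natCast_val, ZMod.cast_id]
      rw [toAdd_ofAdd, mul_comm]
    · rw [Pi.pow_apply, Pi.pow_apply, hzdef, Pi.mulSingle_eq_of_ne hi, one_pow]
      exact aux_pow_dvd _ _ (hkey i hi) _
  have hz1 : z ≠ 1 := by
    intro hh
    have h2 := congrFun hh L
    rw [hzdef, Pi.mulSingle_eq_same, Pi.one_apply] at h2
    exact hNm ((ZMod.natCast_eq_zero_iff m (n L)).mp (ofAdd_eq_one.mp h2))
  have hzp : z ^ p = 1 := by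
    funext i
    rcases eq_or_ne i L with hiL | hi
    · subst hiL
      rw [Pi.pow_apply, hzdef, Pi.mulSingle_eq_same, Pi.one_apply, ← ofAdd_nsmul]
      rw [nsmul_eq_mul, ← Nat.cast_mul, hpm]
      simp
    · rw [Pi.pow_apply, hzdef, Pi.mulSingle_eq_of_ne hi, one_pow, Pi.one_apply]
  have horder : orderOf z = p := orderOf_eq_prime hzp hz1
  have hHK : ∀ (i : I) (g : IG k n), g ∈ H i → g ^ m = 1 := by
    intro i g hg
    obtain ⟨w, hw⟩ : ∃ w : IG k n, w ^ m ∉ H i := by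
      by_contra hall
      push_neg at hall
      have hq : ∀ x : IG k n ⧸ H i, x ^ m = 1 := by
        intro x
        induction x using QuotientGroup.induction_on with
        | H w =>
          rw [← QuotientGroup.mk_pow]
          exact (QuotientGroup.eq_one_iff _).mpr (hall w)
      have hdm := Monoid.exponent_dvd_of_forall_pow_eq_one hq
      rw [hexp i i0] at hdm
      exact hNm (hNe.trans hdm)
    have hzH : z ∉ H i := by
      intro hzH
      exact hw ((hA w) ▸ Subgroup.pow_mem _ hzH _)
    have hgm : g ^ m ∈ H i := Subgroup.pow_mem _ hg m
    rw [hA g] at hgm ⊢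
    by_contra hne1
    have hpj : ¬ p ∣ (Multiplicative.toAdd (g L)).val := by
      rintro ⟨c, hc⟩
      rw [hc, pow_mul, hzp, one_pow] at hne1
      exact hne1 rfl
    have hcop : Nat.Coprime (Multiplicative.toAdd (g L)).val p :=
      Nat.Coprime.symm ((Nat.Prime.coprime_iff_not_dvd hp).mpr hpj)
    obtain ⟨c, -, hc⟩ := Nat.exists_mul_mod_eq_one_of_coprime hcop hp.one_lt
    have hzc : (z ^ (Multiplicative.toAdd (g L)).val) ^ c = z := by
      rw [← pow_mul, ← pow_mod_orderOf, horder, hc, pow_one]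
    exact hzH (hzc ▸ Subgroup.pow_mem _ hgm c)
  have hδm : δ ^ m = 1 := by
    have hK : (⊤ : Subgroup (IG k n)) ≤ (powMonoidHom m : IG k n →* IG k n).ker := by
      rw [← hsup]
      exact iSup_le fun i g hg => hHK i g hg
    exact hK (Subgroup.mem_top δ)
  have h2 := congrFun hδm L
  rw [Pi.pow_apply, hδdef, Pi.mulSingle_eq_same, Pi.one_apply, ← ofAdd_nsmul] at h2
  have h3 := ofAdd_eq_one.mp h2
  rw [nsmul_eq_mul, mul_one] at h3
  exact hNm ((ZMod.natCast_eq_zero_iff m (n L)).mp h3)
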